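/- arXiv:1910.05487 — 3 statements merged into one kernel-verified Lean document; each statement's English description precedes it below -/
import Mathlib

section
/- Let R be a commutative ring and I an ideal contained in the Jacobson radical of R. If M and N are projective R-modules and there exists an R/I-module isomorphism φ : M/IM → N/IN, then there exists an R-module isomorphism ψ : M → N lifting φ (i.e., ψ reduces to φ modulo I). -/
/-- Let `R` be a commutative ring and `I` an ideal contained in the Jacobson radical of `R`.
If `M` and `N` are (finitely generated) projective `R`-modules and
`φ : M/IM ≃ N/IN` is an isomorphism of the reductions, then `φ` lifts to an isomorphism
`ψ : M ≃ N`, i.e. `ψ` reduces to `φ` modulo `I`. -/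
theorem exists_linearEquiv_lift_of_le_jacobson
    {R : Type*} [CommRing R] (I : Ideal R)
    (hI : I ≤ Ideal.jacobson (⊥ : Ideal R))
    (M N : Type*) [AddCommGroup M] [Module R M] [AddCommGroup N] [Module R N]
    [Module.Finite R M] [Module.Projective R M]
    [Module.Finite R N] [Module.Projective R N]
    (φ : (M ⧸ (I • (⊤ : Submodule R M))) ≃ₗ[R] (N ⧸ (I • (⊤ : Submodule R N)))) :
    ∃ ψ : M ≃ₗ[R] N, ∀ m : M,
      Submodule.Quotient.mk (p := I • (⊤ : Submodule R N)) (ψ m)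
        = φ (Submodule.Quotient.mk (p := I • (⊤ : Submodule R M)) m) := by
  set pM := (I • (⊤ : Submodule R M)).mkQ
  set pN := (I • (⊤ : Submodule R N)).mkQ
  obtain ⟨f, hf⟩ := Module.projective_lifting_property pN
    ((φ : (M ⧸ (I • (⊤ : Submodule R M))) →ₗ[R] (N ⧸ (I • (⊤ : Submodule R N)))).comp pM)
    (Submodule.mkQ_surjective _)
  obtain ⟨g, hg⟩ := Module.projective_lifting_property pM
    ((φ.symm : (N ⧸ (I • (⊤ : Submodule R N))) →ₗ[R] (M ⧸ (I • (⊤ : Submodule R M)))).comp pN)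
    (Submodule.mkQ_surjective _)
  have hf' : ∀ m, pN (f m) = φ (pM m) := fun m => LinearMap.congr_fun hf m
  have hg' : ∀ n, pM (g n) = φ.symm (pN n) := fun n => LinearMap.congr_fun hg n
  -- f is surjective by Nakayama
  have hfsurj : Function.Surjective f := by
    rw [← LinearMap.range_eq_top]
    have : (⊤ : Submodule R N) ≤ LinearMap.range f ⊔ I • ⊤ := by
      intro n _
      obtain ⟨q, hq⟩ := (Submodule.mkQ_surjective (I • (⊤ : Submodule R M))) (φ.symm (pN n))
      have : pN (n - f q) = 0 := by
        rw [map_sub, hf' q, hq, LinearEquiv.apply_symm_apply, sub_self]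
      have hmem : n - f q ∈ I • (⊤ : Submodule R N) := by
        rwa [← Submodule.ker_mkQ (I • (⊤ : Submodule R N)), LinearMap.mem_ker]
      have : n = f q + (n - f q) := by abel
      rw [this]
      exact Submodule.add_mem_sup (LinearMap.mem_range_self f q) hmem
    have h2 := Submodule.le_of_le_smul_of_le_jacobson_bot
      (Module.Finite.fg_top (R := R) (M := N)) hI (by simpa using this)
    exact top_le_iff.mp h2
  -- g ∘ f is surjective by Nakayama, hence injective, so f is injective
  have hgf : ∀ m, pM (g (f m)) = pM m := by
    intro m; rw [hg', hf', LinearEquiv.symm_apply_apply]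
  have hgfsurj : Function.Surjective (g ∘ₗ f) := by
    rw [← LinearMap.range_eq_top]
    have : (⊤ : Submodule R M) ≤ LinearMap.range (g ∘ₗ f) ⊔ I • ⊤ := by
      intro m _
      have : pM (m - g (f m)) = 0 := by rw [map_sub, hgf, sub_self]
      have hmem : m - g (f m) ∈ I • (⊤ : Submodule R M) := by
        rwa [← Submodule.ker_mkQ (I • (⊤ : Submodule R M)), LinearMap.mem_ker]
      have hm : m = g (f m) + (m - g (f m)) := by abel
      rw [hm]
      exact Submodule.add_mem_sup (LinearMap.mem_range_self (g ∘ₗ f) m) hmem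
    have h2 := Submodule.le_of_le_smul_of_le_jacobson_bot
      (Module.Finite.fg_top (R := R) (M := M)) hI (by simpa using this)
    exact top_le_iff.mp h2
  have hgfinj : Function.Injective (g ∘ₗ f) :=
    OrzechProperty.injective_of_surjective_endomorphism (g ∘ₗ f) hgfsurj
  have hfinj : Function.Injective f := fun a b hab => hgfinj (by simp [hab])
  exact ⟨LinearEquiv.ofBijective f ⟨hfinj, hfsurj⟩, fun m => hf' m⟩
end

section
/- Let R be a commutative ring and I an ideal contained in the Jacobson radical of R. If P is a finitely generated projective R-module such that P/IP is a free R/I-module, then P is a free R-module. -/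
/-- If `I` is an ideal contained in the Jacobson radical of a commutative ring `R` and
`P` is a finitely generated projective `R`-module such that `P/IP` is a free `R/I`-module
(equivalently, `P/IP ≅ (R/I)^m` for some `m`), then `P` is a free `R`-module. -/
theorem free_of_quotient_free_of_le_jacobson
    {R : Type*} [CommRing R] (I : Ideal R)
    (hI : I ≤ Ideal.jacobson (⊥ : Ideal R))
    (P : Type*) [AddCommGroup P] [Module R P]
    [Module.Finite R P] [Module.Projective R P]
    (hfree : ∃ m : ℕ,
      Nonempty ((P ⧸ (I • (⊤ : Submodule R P))) ≃ₗ[R] (Fin m → R ⧸ I))) :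
    Module.Free R P := by
  classical
  obtain ⟨m, ⟨e⟩⟩ := hfree
  -- lift the standard basis of (R/I)^m to elements of P
  choose b hb using fun i : Fin m =>
    Submodule.Quotient.mk_surjective (I • (⊤ : Submodule R P)) (e.symm (Pi.single i 1))
  set f : (Fin m → R) →ₗ[R] P := Fintype.linearCombination R b with hf
  -- the standard "basis" spans (Fin m → R ⧸ I) as an R-module
  have hspanN : Submodule.span R (Set.range fun i : Fin m => Pi.single i (1 : R ⧸ I)) = ⊤ := by
    rw [eq_top_iff]
    intro x _
    rw [← Finset.univ_sum_single x]
    refine Submodule.sum_mem _ fun i _ => ?_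
    obtain ⟨r, hr⟩ := Ideal.Quotient.mk_surjective (x i)
    have hsx : Pi.single i (x i) = r • (Pi.single i (1 : R ⧸ I) : Fin m → R ⧸ I) := by
      funext j
      by_cases h : j = i
      · subst h
        simp only [Pi.single_eq_same, Pi.smul_apply, ← hr]
        have h1 : (1 : R ⧸ I) = Submodule.Quotient.mk (1 : R) := rfl
        rw [h1, ← Submodule.Quotient.mk_smul, smul_eq_mul, mul_one]
        rfl
      · simp [Pi.single_eq_of_ne h]
    rw [hsx]
    exact Submodule.smul_mem _ _ (Submodule.subset_span ⟨i, rfl⟩)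
  -- f is surjective
  have hfsurj : Function.Surjective f := by
    have hrange : LinearMap.range f = Submodule.span R (Set.range b) := by
      rw [hf, Fintype.range_linearCombination]
    rw [← LinearMap.range_eq_top, hrange]
    have hmap : Submodule.map (I • (⊤ : Submodule R P)).mkQ (Submodule.span R (Set.range b))
        = ⊤ := by
      rw [Submodule.map_span]
      have himg : (I • (⊤ : Submodule R P)).mkQ '' Set.range b
          = e.symm '' (Set.range fun i : Fin m => Pi.single i (1 : R ⧸ I)) := by
        rw [← Set.range_comp, ← Set.range_comp]
        exact congrArg Set.range (funext fun i => hb i)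
      rw [himg, ← LinearEquiv.coe_coe, ← Submodule.map_span, hspanN, Submodule.map_top]
      exact LinearEquiv.range e.symm
    have hsup : Submodule.span R (Set.range b) ⊔ I • (⊤ : Submodule R P) = ⊤ := by
      have h2 := congrArg (Submodule.comap (I • (⊤ : Submodule R P)).mkQ) hmap
      rwa [Submodule.comap_map_eq, Submodule.ker_mkQ, Submodule.comap_top] at h2
    rw [eq_top_iff]
    exact Submodule.le_of_le_smul_of_le_jacobson_bot
      (Module.Finite.fg_top (R := R) (M := P)) hI hsup.ge
  -- splitting s of f
  obtain ⟨s, hs⟩ := Module.projective_lifting_property f (LinearMap.id (R := R) (M := P)) hfsurj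
  -- the induced map on quotients, (R^m)/(I•⊤) → P/(I•⊤)
  have hcomap : I • (⊤ : Submodule R (Fin m → R)) ≤
      Submodule.comap f (I • (⊤ : Submodule R P)) := by
    rw [← Submodule.map_le_iff_le_comap, Submodule.map_smul'']
    exact Submodule.smul_mono le_rfl le_top
  set fbar := Submodule.mapQ (I • (⊤ : Submodule R (Fin m → R)))
    (I • (⊤ : Submodule R P)) f hcomap with hfbar
  have hfbar_mk : ∀ x, fbar (Submodule.Quotient.mk x)
      = Submodule.Quotient.mk (f x) := fun x => rfl
  -- identification of (R^m)/(I•⊤) with (R/I)^m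
  have hpi : I • (⊤ : Submodule R (Fin m → R)) =
      Submodule.pi Set.univ (fun _ : Fin m => (I : Submodule R R)) := by
    apply le_antisymm
    · refine Submodule.smul_le.2 fun r hr x _ => ?_
      intro i _
      simpa using I.mul_mem_right (x i) hr
    · intro x hx
      rw [← Finset.univ_sum_single x]
      refine Submodule.sum_mem _ fun i _ => ?_
      have : Pi.single i (x i) = x i • (Pi.single i (1 : R) : Fin m → R) := by
        funext j
        by_cases h : j = i
        · subst h; simp
        · simp [Pi.single_eq_of_ne h]
      rw [this]
      exact Submodule.smul_mem_smul (hx i trivial) trivial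
  let eN : ((Fin m → R) ⧸ I • (⊤ : Submodule R (Fin m → R))) ≃ₗ[R] (Fin m → R ⧸ I) :=
    (Submodule.quotEquivOfEq _ _ hpi).trans
      (Submodule.quotientPi (fun _ : Fin m => (I : Submodule R R)))
  -- the endomorphism T of the finite module (R^m)/(I•⊤)
  let T := (eN.symm.toLinearMap ∘ₗ e.toLinearMap) ∘ₗ fbar
  have hTsurj : Function.Surjective T := by
    have h1 : Function.Surjective fbar := by
      intro y
      obtain ⟨p, hp⟩ := Submodule.Quotient.mk_surjective _ y
      obtain ⟨x, hx⟩ := hfsurj p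
      exact ⟨Submodule.Quotient.mk x, by rw [hfbar_mk, hx, hp]⟩
    exact (eN.symm.surjective.comp e.surjective).comp h1
  have hTinj : Function.Injective T :=
    OrzechProperty.injective_of_surjective_endomorphism T hTsurj
  have hfbar_inj : Function.Injective fbar := by
    intro x y hxy
    apply hTinj
    simp only [T, LinearMap.comp_apply, hxy]
  -- the kernel of f
  set K := LinearMap.ker f with hK
  have hKle : K ≤ I • (⊤ : Submodule R (Fin m → R)) := by
    intro x hx
    have h0 : fbar (Submodule.Quotient.mk x) = 0 := by
      rw [hfbar_mk, (LinearMap.mem_ker.mp hx)]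
      simp
    have := hfbar_inj (a₁ := Submodule.Quotient.mk x) (a₂ := 0) (by simpa using h0)
    rwa [Submodule.Quotient.mk_eq_zero] at this
  set g : (Fin m → R) →ₗ[R] (Fin m → R) := LinearMap.id - s ∘ₗ f with hg
  have hrange_g : LinearMap.range g = K := by
    apply le_antisymm
    · rintro _ ⟨x, rfl⟩
      have : f (g x) = 0 := by
        simp only [hg, LinearMap.sub_apply, LinearMap.id_apply, LinearMap.comp_apply, map_sub]
        have := congrArg (fun h => h (f x)) hs
        simp only [LinearMap.comp_apply, LinearMap.id_apply] at this
        rw [this, sub_self]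
      exact LinearMap.mem_ker.mpr this
    · intro x hx
      refine ⟨x, ?_⟩
      simp [hg, LinearMap.mem_ker.mp hx]
  have hKfg : K.FG := by
    rw [← hrange_g, ← Submodule.map_top]
    exact Submodule.FG.map g (Module.Finite.fg_top (R := R) (M := Fin m → R))
  have hKsmul : K ≤ I • K := by
    intro x hx
    have hgx : g x = x := by simp [hg, LinearMap.mem_ker.mp hx]
    have : g x ∈ Submodule.map g (I • (⊤ : Submodule R (Fin m → R))) :=
      Submodule.mem_map_of_mem (hKle hx)
    rw [Submodule.map_smul'', Submodule.map_top, hrange_g, hgx] at this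
    exact this
  have hKbot : K = ⊥ :=
    Submodule.eq_bot_of_le_smul_of_le_jacobson_bot I K hKfg hKsmul hI
  have hfinj : Function.Injective f := by
    rw [← LinearMap.ker_eq_bot]; exact hKbot
  exact Module.Free.of_equiv (LinearEquiv.ofBijective f ⟨hfinj, hfsurj⟩)
end

section
/- Let (R_i, φ_i) be a directed system of rings each of which is ϖ-adically complete for a fixed nonzerodivisor ϖ mapped compatibly through the system, such that each pair (R_i, (ϖ)) is Henselian, and let R = ⋃_i R_i with ϖ lying in the Jacobson radical of R. Then the pair (R, (ϖ)) is Henselian. -/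
/-- Let `R = ⋃_i R_i` be a directed union of subrings, with a fixed nonzerodivisor `ϖ`
contained in every `R_i`, such that each `R_i` is `ϖ`-adically complete and each pair
`(R_i, (ϖ))` is Henselian, and such that `ϖ` lies in the Jacobson radical of `R`.
Then the pair `(R, (ϖ))` is Henselian. -/
theorem henselian_of_directed_union
    {R : Type*} [CommRing R]
    {ι : Type*} [Preorder ι] [IsDirected ι (· ≤ ·)] [Nonempty ι]
    (S : ι → Subring R) (hmono : Monotone S)
    (hunion : ∀ r : R, ∃ i, r ∈ S i)
    (ϖ : R) (hnzd : ∀ x : R, ϖ * x = 0 → x = 0)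
    (hϖ : ∀ i, ϖ ∈ S i)
    (hcomplete : ∀ i, IsAdicComplete (Ideal.span {(⟨ϖ, hϖ i⟩ : S i)}) (S i))
    (hhens : ∀ i, HenselianRing (S i) (Ideal.span {(⟨ϖ, hϖ i⟩ : S i)}))
    (hjac : ϖ ∈ Ideal.jacobson (⊥ : Ideal R)) :
    HenselianRing R (Ideal.span {ϖ}) := by
  classical
  constructor
  · rw [Ideal.span_le, Set.singleton_subset_iff]
    exact hjac
  · intro f hf a₀ h₁ h₂
    -- extract witnesses lying in R
    obtain ⟨c, hc⟩ := Ideal.mem_span_singleton'.mp h₁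
    obtain ⟨b, hb⟩ := Ideal.Quotient.mk_surjective (IsUnit.unit h₂)⁻¹.val
    have hb1 : (Polynomial.derivative f).eval a₀ * b - 1 ∈ Ideal.span {ϖ} := by
      rw [← Ideal.Quotient.eq_zero_iff_mem]
      simp only [map_sub, map_mul, map_one, hb]
      rw [sub_eq_zero]
      exact (IsUnit.mul_val_inv h₂)
    obtain ⟨x, hx⟩ := Ideal.mem_span_singleton'.mp hb1
    -- choose indices
    choose idx hidx using hunion
    obtain ⟨i, hi⟩ := Finset.exists_le
      ((f.coeffs.image idx) ∪ {idx a₀, idx c, idx b, idx x})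
    have hcoe : (↑f.coeffs : Set R) ⊆ (S i : Set R) := by
      intro r hr
      exact hmono (hi _ (Finset.mem_union_left _
        (Finset.mem_image_of_mem idx hr))) (hidx r)
    have ha₀ : a₀ ∈ S i := hmono (hi _ (by simp)) (hidx a₀)
    have hcS : c ∈ S i := hmono (hi _ (by simp)) (hidx c)
    have hbS : b ∈ S i := hmono (hi _ (by simp)) (hidx b)
    have hxS : x ∈ S i := hmono (hi _ (by simp)) (hidx x)
    set g : Polynomial (S i) := f.toSubring (S i) hcoe with hg
    have hmap : g.map (Subring.subtype (S i)) = f := Polynomial.map_toSubring f (S i) hcoe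
    have hgm : g.Monic := (Polynomial.monic_toSubring f (S i) hcoe).mpr hf
    set J : Ideal (S i) := Ideal.span {(⟨ϖ, hϖ i⟩ : S i)} with hJ
    have heval : ∀ y : S i, ((g.eval y : S i) : R) = f.eval (y : R) := by
      intro y
      rw [← hmap, Polynomial.eval_map]
      exact (Polynomial.eval₂_at_apply (Subring.subtype (S i)) y).symm ▸ rfl
    have hev1 : g.eval ⟨a₀, ha₀⟩ ∈ J := by
      refine Ideal.mem_span_singleton'.mpr ⟨⟨c, hcS⟩, ?_⟩
      apply Subtype.ext
      push_cast
      rw [heval]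
      exact hc
    have hder : (((Polynomial.derivative g).eval (⟨a₀, ha₀⟩ : S i) : S i) : R)
        = (Polynomial.derivative f).eval a₀ := by
      rw [← hmap, Polynomial.derivative_map, Polynomial.eval_map]
      exact (Polynomial.eval₂_at_apply (Subring.subtype (S i)) _).symm
    have hu : IsUnit (Ideal.Quotient.mk J ((Polynomial.derivative g).eval ⟨a₀, ha₀⟩)) := by
      refine IsUnit.of_mul_eq_one (Ideal.Quotient.mk J ⟨b, hbS⟩) ?_
      rw [← map_mul, ← map_one (Ideal.Quotient.mk J), Ideal.Quotient.mk_eq_mk_iff_sub_mem]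
      refine Ideal.mem_span_singleton'.mpr ⟨⟨x, hxS⟩, ?_⟩
      apply Subtype.ext
      push_cast
      rw [hder]
      exact hx
    obtain ⟨a, hroot, hsub⟩ := (hhens i).is_henselian g hgm ⟨a₀, ha₀⟩ hev1 hu
    refine ⟨(a : R), ?_, ?_⟩
    · have := heval a
      rw [hroot] at this
      simpa [Polynomial.IsRoot] using this.symm
    · obtain ⟨d, hd⟩ := Ideal.mem_span_singleton'.mp hsub
      refine Ideal.mem_span_singleton'.mpr ⟨(d : R), ?_⟩
      have := congrArg (Subtype.val) hd
      push_cast at this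
      simpa using this
end
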